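/- arXiv:1902.04639 — 2 statements merged into one kernel-verified Lean document; each statement's English description precedes it below -/
import Mathlib

section
/- For every α ∈ [1,∞] and every η ∈ [0,1] with η ≠ 1/2, the margin α-loss is classification-calibrated: inf over f ∈ ℝ with f·(2η-1) ≤ 0 of [η·l̃^α(f) + (1-η)·l̃^α(-f)] is strictly greater than inf over all f ∈ ℝ of [η·l̃^α(f) + (1-η)·l̃^α(-f)]. -/
/-- The sigmoid function `σ(z) = 1/(1+e^{-z})`. -/
noncomputable def sigmoid (z : ℝ) : ℝ := 1 / (1 + Real.exp (-z))

/-- The margin `α`-loss for `α ∈ [1,∞]` (modeled as `α : EReal`):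
`l̃^1(z) = -log σ(z)`, `l̃^∞(z) = 1 - σ(z)`, and
`l̃^α(z) = (α/(α-1))·(1 - σ(z)^{1-1/α})` for `α ∈ (1,∞)`. -/
noncomputable def margAlphaLoss (α : EReal) (z : ℝ) : ℝ :=
  if α = 1 then -Real.log (sigmoid z)
  else if α = ⊤ then 1 - sigmoid z
  else (α.toReal / (α.toReal - 1)) * (1 - sigmoid z ^ (1 - 1/α.toReal))

lemma sigmoid_pos (z : ℝ) : 0 < sigmoid z := by
  unfold sigmoid; positivity

lemma sigmoid_lt_one (z : ℝ) : sigmoid z < 1 := by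
  unfold sigmoid
  rw [div_lt_one (by positivity)]
  linarith [Real.exp_pos (-z)]

lemma sigmoid_neg (z : ℝ) : sigmoid (-z) = 1 - sigmoid z := by
  unfold sigmoid
  rw [neg_neg, Real.exp_neg]
  have h := Real.exp_pos z
  rw [eq_sub_iff_add_eq]
  field_simp
  ring

lemma sigmoid_zero : sigmoid 0 = 1/2 := by
  simp [sigmoid]
  norm_num

lemma sigmoid_le_half {z : ℝ} (hz : z ≤ 0) : sigmoid z ≤ 1/2 := by
  unfold sigmoid
  rw [div_le_div_iff₀ (by positivity) (by norm_num)]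
  have : (1:ℝ) ≤ Real.exp (-z) := Real.one_le_exp (by linarith)
  linarith

lemma sigmoid_logit {η : ℝ} (h0 : 0 < η) (h1 : η < 1) :
    sigmoid (Real.log (η / (1 - η))) = η := by
  have h2 : 0 < 1 - η := by linarith
  unfold sigmoid
  rw [← Real.log_inv, Real.exp_log (by positivity)]
  field_simp
  ring

lemma half_lt_sigmoid_one : (1:ℝ)/2 < sigmoid 1 := by
  unfold sigmoid
  rw [div_lt_div_iff₀ (by norm_num) (by positivity)]
  have : Real.exp (-1) < 1 := Real.exp_lt_one_iff.2 (by norm_num)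
  linarith

lemma toReal_gt_one {α : EReal} (hα : 1 ≤ α) (h1 : α ≠ 1) (ht : α ≠ ⊤) :
    1 < α.toReal := by
  have hb : α ≠ ⊥ := by
    intro h
    rw [h, le_bot_iff] at hα
    exact absurd hα (by rw [show (1:EReal) = ((1:ℝ):EReal) by norm_cast]; exact EReal.coe_ne_bot 1)
  lift α to ℝ using ⟨ht, hb⟩
  rw [EReal.toReal_coe]
  rw [show (1 : EReal) = ((1:ℝ) : EReal) by norm_cast, EReal.coe_le_coe_iff] at hα
  rcases hα.lt_or_eq with h | h
  · exact h
  · exact absurd (by exact_mod_cast h.symm) h1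

/-- Conditional risk. -/
noncomputable def condRisk (α : EReal) (η f : ℝ) : ℝ :=
  η * margAlphaLoss α f + (1 - η) * margAlphaLoss α (-f)

lemma condRisk_symm (α : EReal) (η f : ℝ) : condRisk α η f = condRisk α (1 - η) (-f) := by
  unfold condRisk
  rw [neg_neg]
  ring

lemma loss_nonneg {α : EReal} (hα : 1 ≤ α) (z : ℝ) : 0 ≤ margAlphaLoss α z := by
  unfold margAlphaLoss
  split_ifs with h1 ht
  · have := Real.log_nonpos (sigmoid_pos z).le (sigmoid_lt_one z).le
    linarith
  · linarith [sigmoid_lt_one z]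
  · have ha := toReal_gt_one hα h1 ht
    have hp0 : 0 < 1 - 1/α.toReal := by
      have : 1/α.toReal < 1 := by rw [div_lt_one (by linarith)]; linarith
      linarith
    have hσp : sigmoid z ^ (1 - 1/α.toReal) ≤ 1 :=
      Real.rpow_le_one (sigmoid_pos z).le (sigmoid_lt_one z).le hp0.le
    have hc : 0 < α.toReal / (α.toReal - 1) := by
      apply div_pos <;> linarith
    nlinarith

lemma condRisk_nonneg {α : EReal} (hα : 1 ≤ α) {η : ℝ} (h0 : 0 ≤ η) (h1 : η ≤ 1)
    (f : ℝ) : 0 ≤ condRisk α η f := by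
  unfold condRisk
  have := loss_nonneg hα f
  have := loss_nonneg hα (-f)
  nlinarith

/-- Monotonicity on the wrong side: for `η ≥ 1/2` and `f ≤ 0`, `C(0) ≤ C(f)`. -/
lemma condRisk_mono (α : EReal) (hα : 1 ≤ α) {η : ℝ} (hη : 1/2 ≤ η) (hη1 : η ≤ 1)
    {f : ℝ} (hf : f ≤ 0) : condRisk α η 0 ≤ condRisk α η f := by
  have hs0 : 0 < sigmoid f := sigmoid_pos f
  have hs1 : sigmoid f < 1 := sigmoid_lt_one f
  have hs2 : sigmoid f ≤ 1/2 := sigmoid_le_half hf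
  set s := sigmoid f with hsdef
  unfold condRisk margAlphaLoss
  split_ifs with h1 ht
  · -- α = 1
    simp only [neg_zero, sigmoid_zero, sigmoid_neg, ← hsdef]
    have LS : Real.log s ≤ Real.log (1 - s) := Real.log_le_log hs0 (by linarith)
    have Lsum : Real.log s + Real.log (1 - s) ≤ 2 * Real.log (1/2) := by
      have e1 : Real.log s + Real.log (1 - s) = Real.log (s * (1 - s)) :=
        (Real.log_mul hs0.ne' (by linarith : (0:ℝ) < 1 - s).ne').symm
      have e2 : Real.log (s * (1 - s)) ≤ Real.log (1/4) :=
        Real.log_le_log (mul_pos hs0 (by linarith)) (by nlinarith)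
      have e3 : Real.log (1/4 : ℝ) = 2 * Real.log (1/2) := by
        rw [show (1/4 : ℝ) = (1/2) * (1/2) by norm_num,
          Real.log_mul (by norm_num) (by norm_num)]
        ring
      linarith
    have hmul : 0 ≤ (η - 1/2) * (Real.log (1 - s) - Real.log s) :=
      mul_nonneg (by linarith) (by linarith)
    nlinarith
  · -- α = ⊤
    simp only [neg_zero, sigmoid_zero, sigmoid_neg, ← hsdef]
    nlinarith
  · -- 1 < α < ⊤
    have ha := toReal_gt_one hα h1 ht
    set p : ℝ := 1 - 1/α.toReal with hpdef
    have hp0 : 0 < p := by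
      have : 1/α.toReal < 1 := by rw [div_lt_one (by linarith)]; linarith
      simp only [hpdef]; linarith
    have hp1 : p < 1 := by
      have : 0 < 1/α.toReal := by positivity
      simp only [hpdef]; linarith
    have hc : 0 < α.toReal / (α.toReal - 1) := by
      apply div_pos <;> linarith
    simp only [neg_zero, sigmoid_zero, sigmoid_neg, ← hsdef]
    have hmono : s ^ p ≤ (1 - s) ^ p := Real.rpow_le_rpow hs0.le (by linarith) hp0.le
    have hconc : (1/2:ℝ) * s ^ p + (1/2) * (1 - s) ^ p ≤ ((1:ℝ)/2) ^ p := by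
      have hcv := (Real.concaveOn_rpow hp0.le hp1.le).2 (Set.mem_Ici.2 hs0.le)
        (Set.mem_Ici.2 (by linarith : (0:ℝ) ≤ 1 - s))
        (by norm_num : (0:ℝ) ≤ 1/2) (by norm_num : (0:ℝ) ≤ 1/2) (by norm_num)
      simp only [smul_eq_mul] at hcv
      rwa [show (1/2:ℝ) * s + 1/2 * (1 - s) = 1/2 by ring] at hcv
    have hmul : 0 ≤ (η - 1/2) * ((1 - s) ^ p - s ^ p) :=
      mul_nonneg (by linarith) (by linarith)
    have hK : η * s ^ p + (1 - η) * (1 - s) ^ p ≤ ((1:ℝ)/2) ^ p := by nlinarith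
    nlinarith

/-- Existence of a point with strictly smaller risk than at `0`, for `η > 1/2`. -/
lemma condRisk_exists_lt (α : EReal) (hα : 1 ≤ α) {η : ℝ} (hη : 1/2 < η) (hη1 : η ≤ 1) :
    ∃ f : ℝ, condRisk α η f < condRisk α η 0 := by
  rcases hη1.lt_or_eq with hlt | heq
  · -- 1/2 < η < 1 : take f₀ = logit η
    refine ⟨Real.log (η / (1 - η)), ?_⟩
    have hσ : sigmoid (Real.log (η / (1 - η))) = η := sigmoid_logit (by linarith) hlt
    have hη0 : (0:ℝ) < η := by linarith
    have hη1' : (0:ℝ) < 1 - η := by linarith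
    unfold condRisk margAlphaLoss
    split_ifs with h1 ht
    · -- α = 1
      simp only [neg_zero, sigmoid_zero, sigmoid_neg, hσ]
      have A : Real.log ((1/2) / η) < (1/2) / η - 1 := by
        apply Real.log_lt_sub_one_of_pos (by positivity)
        intro h
        rw [div_eq_one_iff_eq (by positivity)] at h
        exact absurd h.symm (by intro hh; rw [hh] at hη; linarith)
      have B : Real.log ((1/2) / (1 - η)) ≤ (1/2) / (1 - η) - 1 :=
        Real.log_le_sub_one_of_pos (by positivity)
      rw [Real.log_div (by norm_num) (by positivity)] at A
      rw [Real.log_div (by norm_num) (by positivity)] at B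
      have hA := mul_lt_mul_of_pos_left A hη0
      have hB := mul_le_mul_of_nonneg_left B hη1'.le
      have e1 : η * ((1/2) / η - 1) = 1/2 - η := by field_simp
      have e2 : (1 - η) * ((1/2) / (1 - η) - 1) = 1/2 - (1 - η) := by field_simp
      rw [e1] at hA
      rw [e2] at hB
      nlinarith
    · -- α = ⊤
      simp only [neg_zero, sigmoid_zero, sigmoid_neg, hσ]
      nlinarith [sq_nonneg (2*η - 1), hη]
    · -- 1 < α < ⊤
      have ha := toReal_gt_one hα h1 ht
      set p : ℝ := 1 - 1/α.toReal with hpdef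
      have hp0 : 0 < p := by
        have : 1/α.toReal < 1 := by rw [div_lt_one (by linarith)]; linarith
        simp only [hpdef]; linarith
      have hc : 0 < α.toReal / (α.toReal - 1) := by
        apply div_pos <;> linarith
      simp only [neg_zero, sigmoid_zero, sigmoid_neg, hσ]
      have hq : (1:ℝ) < p + 1 := by linarith
      have hcv := (strictConvexOn_rpow hq).2 (Set.mem_Ici.2 hη0.le)
        (Set.mem_Ici.2 hη1'.le) (by intro h; rw [h] at hη; linarith)
        (by norm_num : (0:ℝ) < 1/2) (by norm_num : (0:ℝ) < 1/2) (by norm_num)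
      simp only [smul_eq_mul] at hcv
      rw [show (1/2:ℝ) * η + 1/2 * (1 - η) = 1/2 by ring] at hcv
      have eη : η ^ (p + 1) = η ^ p * η := by
        rw [Real.rpow_add hη0, Real.rpow_one]
      have eη' : (1 - η) ^ (p + 1) = (1 - η) ^ p * (1 - η) := by
        rw [Real.rpow_add hη1', Real.rpow_one]
      have e2 : ((1:ℝ)/2) ^ (p + 1) = ((1:ℝ)/2) ^ p * (1/2) := by
        rw [Real.rpow_add (by norm_num), Real.rpow_one]
      rw [eη, eη', e2] at hcv
      have hK : ((1:ℝ)/2) ^ p < η * η ^ p + (1 - η) * (1 - η) ^ p := by nlinarith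
      nlinarith
  · -- η = 1 : take f₀ = 1
    subst heq
    refine ⟨1, ?_⟩
    have h12 := half_lt_sigmoid_one
    unfold condRisk margAlphaLoss
    split_ifs with h1 ht
    · simp only [neg_zero, sigmoid_zero, sub_self, zero_mul, one_mul]
      have := Real.log_lt_log (by norm_num : (0:ℝ) < 1/2) h12
      linarith
    · simp only [neg_zero, sigmoid_zero, sub_self, zero_mul, one_mul]
      linarith
    · have ha := toReal_gt_one hα h1 ht
      set p : ℝ := 1 - 1/α.toReal with hpdef
      have hp0 : 0 < p := by
        have : 1/α.toReal < 1 := by rw [div_lt_one (by linarith)]; linarith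
        simp only [hpdef]; linarith
      have hc : 0 < α.toReal / (α.toReal - 1) := by
        apply div_pos <;> linarith
      simp only [neg_zero, sigmoid_zero, sub_self, zero_mul, one_mul]
      have hpow : ((1:ℝ)/2) ^ p < sigmoid 1 ^ p :=
        Real.rpow_lt_rpow (by norm_num) h12 hp0
      nlinarith
  
/-- Main inequality for `η > 1/2`. -/
lemma key (α : EReal) (hα : 1 ≤ α) {η : ℝ} (hη1 : η ≤ 1) (hgt : 1/2 < η) :
    sInf (condRisk α η '' {f : ℝ | f * (2 * η - 1) ≤ 0})
      > sInf (Set.range (condRisk α η)) := by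
  have hset : {f : ℝ | f * (2 * η - 1) ≤ 0} = {f : ℝ | f ≤ 0} := by
    ext f
    simp only [Set.mem_setOf_eq]
    constructor
    · intro h
      by_contra hc
      push_neg at hc
      nlinarith
    · intro h
      nlinarith
  obtain ⟨f₀, hf₀⟩ := condRisk_exists_lt α hα hgt hη1
  rw [hset]
  have hne : (condRisk α η '' {f : ℝ | f ≤ 0}).Nonempty :=
    ⟨condRisk α η 0, 0, by simp, rfl⟩
  have hlb : condRisk α η 0 ≤ sInf (condRisk α η '' {f : ℝ | f ≤ 0}) := by
    apply le_csInf hne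
    rintro x ⟨f, hf, rfl⟩
    exact condRisk_mono α hα hgt.le hη1 hf
  have hbdd : BddBelow (Set.range (condRisk α η)) := by
    refine ⟨0, ?_⟩
    rintro x ⟨f, rfl⟩
    exact condRisk_nonneg hα (by linarith) hη1 f
  have hub : sInf (Set.range (condRisk α η)) ≤ condRisk α η f₀ :=
    csInf_le hbdd ⟨f₀, rfl⟩
  calc sInf (Set.range (condRisk α η)) ≤ condRisk α η f₀ := hub
    _ < condRisk α η 0 := hf₀
    _ ≤ sInf (condRisk α η '' {f : ℝ | f ≤ 0}) := hlb

/-- For every `α ∈ [1,∞]` and every `η ∈ [0,1]` with `η ≠ 1/2`, the margin `α`-loss is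
classification-calibrated: the infimum of the conditional risk over `f` with
`f·(2η-1) ≤ 0` is strictly greater than the unrestricted infimum. -/
theorem margAlphaLoss_classification_calibrated
    (α : EReal) (hα : 1 ≤ α) (η : ℝ) (hη : η ∈ Set.Icc (0:ℝ) 1) (hne : η ≠ 1/2) :
    sInf ((fun f : ℝ => η * margAlphaLoss α f + (1 - η) * margAlphaLoss α (-f)) ''
        {f : ℝ | f * (2 * η - 1) ≤ 0})
      > sInf (Set.range (fun f : ℝ => η * margAlphaLoss α f + (1 - η) * margAlphaLoss α (-f))) := by
  obtain ⟨hη0, hη1⟩ := hη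
  show sInf (condRisk α η '' {f : ℝ | f * (2 * η - 1) ≤ 0})
      > sInf (Set.range (condRisk α η))
  rcases lt_or_gt_of_ne hne with hlt | hgt
  · -- η < 1/2 : reduce to 1 - η via symmetry
    have himg : condRisk α η '' {f : ℝ | f * (2 * η - 1) ≤ 0}
        = condRisk α (1 - η) '' {f : ℝ | f * (2 * (1 - η) - 1) ≤ 0} := by
      ext x
      constructor
      · rintro ⟨f, hf, rfl⟩
        refine ⟨-f, ?_, (condRisk_symm α η f).symm⟩
        simp only [Set.mem_setOf_eq] at hf ⊢
        nlinarith
      · rintro ⟨f, hf, rfl⟩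
        refine ⟨-f, ?_, ?_⟩
        · simp only [Set.mem_setOf_eq] at hf ⊢
          nlinarith
        · rw [condRisk_symm α η (-f), neg_neg]
      
    have hrg : Set.range (condRisk α η) = Set.range (condRisk α (1 - η)) := by
      ext x
      constructor
      · rintro ⟨f, rfl⟩
        exact ⟨-f, (condRisk_symm α η f).symm⟩
      · rintro ⟨f, rfl⟩
        exact ⟨-f, by rw [condRisk_symm α η (-f), neg_neg]⟩
    rw [himg, hrg]
    exact key α hα (by linarith) (by linarith)
  · exact key α hα hη1 hgt
end

section
/- For every α ∈ [1,∞] and every z ∈ ℝ, the second derivative of the margin α-loss is bounded in absolute value by 1/4: |(l̃^α)''(z)| = |σ(z)^{2-1/α}·(1-σ(z)) - (1 - 1/α)·σ(z)^{1-1/α}·(1-σ(z))²| ≤ 1/4 (with the convention 1/α = 0 for α = ∞). -/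
/-- `1/α`, with the convention `1/∞ = 0`. -/
noncomputable def invAlpha (α : EReal) : ℝ := if α = ⊤ then 0 else 1/α.toReal

lemma hasDerivAt_sigmoid (z : ℝ) :
    HasDerivAt sigmoid (sigmoid z * (1 - sigmoid z)) z := by
  have h1 : HasDerivAt (fun z : ℝ => 1 + Real.exp (-z)) (-Real.exp (-z)) z := by
    simpa using ((Real.hasDerivAt_exp (-z)).comp z (hasDerivAt_neg z)).const_add 1
  have hne : (1 : ℝ) + Real.exp (-z) ≠ 0 := by positivity
  have h2 : HasDerivAt (fun z : ℝ => ((1 : ℝ) + Real.exp (-z))⁻¹) _ z := h1.inv hne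
  have : sigmoid = fun z : ℝ => ((1 : ℝ) + Real.exp (-z))⁻¹ := by
    funext x; simp [sigmoid, one_div]
  rw [this]
  convert h2 using 1
  field_simp
  ring

lemma one_ne_top : (1 : EReal) ≠ ⊤ := by
  rw [← EReal.coe_one]; exact EReal.coe_ne_top 1

lemma second_deriv_generic (a : ℝ) (ha : 1 < a) (z : ℝ) :
    deriv (deriv (fun z => (a / (a - 1)) * (1 - sigmoid z ^ (1 - 1/a)))) z
      = sigmoid z ^ (2 - 1/a) * (1 - sigmoid z)
          - (1 - 1/a) * sigmoid z ^ (1 - 1/a) * (1 - sigmoid z) ^ 2 := by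
  have ha0 : a ≠ 0 := by intro h; linarith
  have ha1 : a - 1 ≠ 0 := by intro h; linarith
  have hct : (a / (a - 1)) * (1 - 1/a) = 1 := by field_simp
  have hd1 : deriv (fun z => (a / (a - 1)) * (1 - sigmoid z ^ (1 - 1/a)))
      = fun x => -(sigmoid x ^ (1 - 1/a) * (1 - sigmoid x)) := by
    funext x
    have hpow := (hasDerivAt_sigmoid x).rpow_const (p := 1 - 1/a) (Or.inl (sigmoid_pos x).ne')
    have h := (hpow.const_sub 1).const_mul (a / (a - 1))
    rw [h.deriv]
    have hx : sigmoid x ^ (1 - 1/a - 1) * sigmoid x = sigmoid x ^ (1 - 1/a) := by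
      rw [← Real.rpow_add_one (sigmoid_pos x).ne']; ring_nf
    linear_combination (-(a / (a - 1)) * (1 - 1/a) * (1 - sigmoid x)) * hx
      - (sigmoid x ^ (1 - 1/a) * (1 - sigmoid x)) * hct
  rw [hd1]
  have hpow := (hasDerivAt_sigmoid z).rpow_const (p := 1 - 1/a) (Or.inl (sigmoid_pos z).ne')
  have h2 := (hpow.mul ((hasDerivAt_sigmoid z).const_sub 1)).neg
  rw [show deriv (fun x => -(sigmoid x ^ (1 - 1/a) * (1 - sigmoid x))) z = _ from h2.deriv]
  have hx1 : sigmoid z ^ (1 - 1/a - 1) * sigmoid z = sigmoid z ^ (1 - 1/a) := by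
    rw [← Real.rpow_add_one (sigmoid_pos z).ne']; ring_nf
  have hx2 : sigmoid z ^ (1 - 1/a) * sigmoid z = sigmoid z ^ (2 - 1/a) := by
    rw [← Real.rpow_add_one (sigmoid_pos z).ne']; ring_nf
  linear_combination (-(1 - 1/a) * (1 - sigmoid z) ^ 2) * hx1 + (1 - sigmoid z) * hx2

lemma second_deriv_eq (α : EReal) (hα : 1 ≤ α) (z : ℝ) :
    iteratedDeriv 2 (margAlphaLoss α) z
      = sigmoid z ^ (2 - invAlpha α) * (1 - sigmoid z)
          - (1 - invAlpha α) * sigmoid z ^ (1 - invAlpha α) * (1 - sigmoid z) ^ 2 := by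
  have hit : iteratedDeriv 2 (margAlphaLoss α) = deriv (deriv (margAlphaLoss α)) := by
    rw [iteratedDeriv_succ, iteratedDeriv_one]
  rw [hit]
  by_cases h1 : α = 1
  · have hf : margAlphaLoss α = fun z => -Real.log (sigmoid z) := by
      funext x; rw [margAlphaLoss, if_pos h1]
    have hβ : invAlpha α = 1 := by
      rw [invAlpha, if_neg (h1 ▸ one_ne_top), h1, EReal.toReal_one]; norm_num
    have hd1 : deriv (margAlphaLoss α) = fun x => sigmoid x - 1 := by
      funext x
      rw [hf]
      have h := ((hasDerivAt_sigmoid x).log (sigmoid_pos x).ne').neg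
      rw [show deriv (fun z => -Real.log (sigmoid z)) x = _ from h.deriv]
      field_simp [(sigmoid_pos x).ne']
      ring
    rw [hd1]
    have h2 := (hasDerivAt_sigmoid z).sub_const 1
    rw [h2.deriv, hβ]
    rw [show (2:ℝ) - 1 = 1 by norm_num, Real.rpow_one]
    ring
  · by_cases htop : α = ⊤
    · have hf : margAlphaLoss α = fun z => 1 - sigmoid z := by
        funext x; rw [margAlphaLoss, if_neg h1, if_pos htop]
      have hβ : invAlpha α = 0 := by rw [invAlpha, if_pos htop]
      have hd1 : deriv (margAlphaLoss α) = fun x => -(sigmoid x * (1 - sigmoid x)) := by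
        funext x
        rw [hf]
        exact ((hasDerivAt_sigmoid x).const_sub 1).deriv
      rw [hd1]
      have h2 := (((hasDerivAt_sigmoid z).mul ((hasDerivAt_sigmoid z).const_sub 1))).neg
      rw [show deriv (fun x => -(sigmoid x * (1 - sigmoid x))) z = _ from h2.deriv, hβ]
      rw [show (2:ℝ) - 0 = 2 by norm_num, show (1:ℝ) - 0 = 1 by norm_num,
        Real.rpow_one, Real.rpow_two]
      ring
    · have hlt : (1 : EReal) < α := lt_of_le_of_ne hα (Ne.symm h1)
      have hbot : α ≠ ⊥ := by
        intro hb; rw [hb] at hlt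
        exact absurd hlt (by rw [← EReal.coe_one]; simp)
      have hcoe : ((α.toReal : ℝ) : EReal) = α := EReal.coe_toReal htop hbot
      have ha : 1 < α.toReal := by
        rw [← hcoe] at hlt; exact_mod_cast hlt
      have hf : margAlphaLoss α
          = fun z => (α.toReal / (α.toReal - 1)) * (1 - sigmoid z ^ (1 - 1/α.toReal)) := by
        funext x; rw [margAlphaLoss, if_neg h1, if_neg htop]
      have hβ : invAlpha α = 1 / α.toReal := by rw [invAlpha, if_neg htop]
      rw [hf, hβ]
      exact second_deriv_generic α.toReal ha z


lemma key_bound (s t : ℝ) (hs0 : 0 < s) (hs1 : s < 1) (ht0 : 0 ≤ t) (ht1 : t ≤ 1) :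
    t * s ^ t * (1 - s) ^ 2 ≤ 1/4 := by
  set u := Real.sqrt s with hu
  have hu0 : 0 < u := Real.sqrt_pos.mpr hs0
  have hu1 : u < 1 := by
    rw [hu, show (1:ℝ) = Real.sqrt 1 by simp]
    exact Real.sqrt_lt_sqrt hs0.le hs1
  have hus : u ^ 2 = s := Real.sq_sqrt hs0.le
  have hlog : Real.log s ≤ 2 * (u - 1) := by
    have h1 : Real.log s = 2 * Real.log u := by
      rw [← hus, Real.log_pow]; push_cast; ring
    have h2 : Real.log u ≤ u - 1 := Real.log_le_sub_one_of_pos hu0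
    linarith
  have hlogneg : Real.log s ≤ 0 := Real.log_nonpos hs0.le hs1.le
  set x := t * (-Real.log s) with hx
  have hx0 : 0 ≤ x := mul_nonneg ht0 (by linarith)
  have hkey : x * Real.exp (-x) ≤ Real.exp (-1) := by
    have h3 : x ≤ Real.exp (x - 1) := by
      have := Real.add_one_le_exp (x - 1); linarith
    calc x * Real.exp (-x) ≤ Real.exp (x - 1) * Real.exp (-x) :=
          mul_le_mul_of_nonneg_right h3 (Real.exp_pos _).le
      _ = Real.exp (-1) := by rw [← Real.exp_add]; ring_nf
  have hst : s ^ t = Real.exp (-x) := by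
    rw [Real.rpow_def_of_pos hs0, hx]; ring_nf
  have h4 : t * (-Real.log s) * s ^ t ≤ Real.exp (-1) := by
    rw [hst]; exact hkey
  have hstpos : (0:ℝ) < s ^ t := Real.rpow_pos_of_pos hs0 t
  have h5 : t * s ^ t * (2 * (1 - u)) ≤ Real.exp (-1) := by
    have h6 : t * s ^ t * (2 * (1 - u)) ≤ t * (-Real.log s) * s ^ t := by
      have hts : 0 ≤ t * s ^ t := mul_nonneg ht0 hstpos.le
      nlinarith
    linarith
  have hpoly : (1 - u) * (1 + u) ^ 2 ≤ 32 / 27 := by nlinarith [sq_nonneg (3 * u - 1), hu0.le]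
  have hB : t * s ^ t * (1 - s) ^ 2 ≤ Real.exp (-1) * ((1 - u) * (1 + u) ^ 2 / 2) := by
    have hfac : (0:ℝ) ≤ (1 - u) * (1 + u) ^ 2 / 2 := by nlinarith
    have : t * s ^ t * (1 - s) ^ 2 = (t * s ^ t * (2 * (1 - u))) * ((1 - u) * (1 + u) ^ 2 / 2) := by
      rw [← hus]; ring
    rw [this]
    apply mul_le_mul_of_nonneg_right h5 hfac
  have hexp : Real.exp (-1) < 1 / 2.7182818283 := by
    rw [Real.exp_neg]
    rw [one_div, inv_lt_inv₀ (Real.exp_pos 1) (by norm_num)]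
    exact Real.exp_one_gt_d9
  have hexp0 : (0:ℝ) < Real.exp (-1) := Real.exp_pos _
  calc t * s ^ t * (1 - s) ^ 2 ≤ Real.exp (-1) * ((1 - u) * (1 + u) ^ 2 / 2) := hB
    _ ≤ Real.exp (-1) * (32 / 27 / 2) := by
        apply mul_le_mul_of_nonneg_left _ hexp0.le; linarith
    _ ≤ 1/4 := by nlinarith

lemma abs_bound (s β : ℝ) (hs0 : 0 < s) (hs1 : s < 1) (hb0 : 0 ≤ β) (hb1 : β ≤ 1) :
    |s ^ (2 - β) * (1 - s) - (1 - β) * s ^ (1 - β) * (1 - s) ^ 2| ≤ 1/4 := by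
  have ht0 : 0 ≤ 1 - β := by linarith
  have ht1 : 1 - β ≤ 1 := by linarith
  have he : (2 - β) = (1 - β) + 1 := by ring
  rw [he]
  have hA0 : 0 ≤ s ^ ((1 - β) + 1) * (1 - s) :=
    mul_nonneg (Real.rpow_pos_of_pos hs0 _).le (by linarith)
  have hB0 : 0 ≤ (1 - β) * s ^ (1 - β) * (1 - s) ^ 2 :=
    mul_nonneg (mul_nonneg ht0 (Real.rpow_pos_of_pos hs0 _).le) (sq_nonneg _)
  have hA : s ^ ((1 - β) + 1) * (1 - s) ≤ 1/4 := by
    have h1 : s ^ ((1 - β) + 1) ≤ s ^ (1:ℝ) :=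
      Real.rpow_le_rpow_of_exponent_ge hs0 hs1.le (by linarith)
    rw [Real.rpow_one] at h1
    nlinarith [sq_nonneg (s - 1/2)]
  have hB : (1 - β) * s ^ (1 - β) * (1 - s) ^ 2 ≤ 1/4 := key_bound s (1 - β) hs0 hs1 ht0 ht1
  rw [abs_le]
  constructor <;> linarith

lemma invAlpha_mem (α : EReal) (hα : 1 ≤ α) : 0 ≤ invAlpha α ∧ invAlpha α ≤ 1 := by
  rw [invAlpha]
  split_ifs with h
  · norm_num
  · have hbot : α ≠ ⊥ := by
      intro hb; rw [hb] at hα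
      exact absurd hα (by rw [← EReal.coe_one]; exact not_le.mpr (EReal.bot_lt_coe 1))
    have hcoe : ((α.toReal : ℝ) : EReal) = α := EReal.coe_toReal h hbot
    have ha : 1 ≤ α.toReal := by
      rw [← hcoe] at hα; exact_mod_cast hα
    constructor
    · positivity
    · rw [div_le_one (by linarith)]; linarith

/-- For every `α ∈ [1,∞]` and every `z ∈ ℝ`, the second derivative of the margin
`α`-loss equals `σ(z)^{2-1/α}(1-σ(z)) - (1-1/α)σ(z)^{1-1/α}(1-σ(z))²` in absolute
value, and is bounded in absolute value by `1/4` (convention `1/∞ = 0`). -/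
theorem margAlphaLoss_second_deriv_bound (α : EReal) (hα : 1 ≤ α) (z : ℝ) :
    |iteratedDeriv 2 (margAlphaLoss α) z|
      = |sigmoid z ^ (2 - invAlpha α) * (1 - sigmoid z)
          - (1 - invAlpha α) * sigmoid z ^ (1 - invAlpha α) * (1 - sigmoid z) ^ 2| ∧
    |sigmoid z ^ (2 - invAlpha α) * (1 - sigmoid z)
        - (1 - invAlpha α) * sigmoid z ^ (1 - invAlpha α) * (1 - sigmoid z) ^ 2|
      ≤ 1/4 := by
  have hs0 := sigmoid_pos z
  have hs1 := sigmoid_lt_one z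
  obtain ⟨hb0, hb1⟩ := invAlpha_mem α hα
  have heq := second_deriv_eq α hα z
  refine ⟨by rw [heq], ?_⟩
  exact abs_bound (sigmoid z) (invAlpha α) hs0 hs1 hb0 hb1
end
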